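/- There exists an absolute constant c > 0 such that the following holds. Let q be an odd prime power and let f, h ∈ F_q[X] be polynomials of degree at most 2 such that for every (λ, μ) ∈ F_q × F_q with (λ, μ) ≠ (0, 0) the polynomial λ·f + μ·h is not constant. Then for all nonempty subsets A₁, A₂, A₃ ⊆ F_q, max(|f(A₁) + A₂|, |h(A₁) + A₃|) ≥ c · min(√(|A₁|·q), √(|A₁|²·|A₂|·|A₃|/q)), where f(A₁) = {f(a) : a ∈ A₁}. -/

import Mathlib

open Finset
open scoped Pointwise

section PolyPart
variable {F : Type} [Field F] [Fintype F] [DecidableEq F]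

private lemma eval_quad (f : Polynomial F) (hf : f.degree ≤ 2) (x : F) :
    f.eval x = f.coeff 0 + f.coeff 1 * x + f.coeff 2 * x^2 := by
  have hfd : f.natDegree ≤ 2 := Polynomial.natDegree_le_iff_degree_le.mpr (by exact_mod_cast hf)
  rw [Polynomial.eval_eq_sum_range' (lt_of_le_of_lt hfd (by norm_num : (2:ℕ) < 3))]
  rw [Finset.sum_range_succ, Finset.sum_range_succ, Finset.sum_range_succ, Finset.sum_range_zero]
  ring

private lemma det_ne_zero (f h : Polynomial F) (hf : f.degree ≤ 2) (hh : h.degree ≤ 2)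
    (hind : ∀ l m : F, (l, m) ≠ (0, 0) →
      ∀ a : F, Polynomial.C l * f + Polynomial.C m * h ≠ Polynomial.C a) :
    f.coeff 1 * h.coeff 2 - f.coeff 2 * h.coeff 1 ≠ 0 := by
  have hfd : f.natDegree ≤ 2 := Polynomial.natDegree_le_iff_degree_le.mpr (by exact_mod_cast hf)
  have hhd : h.natDegree ≤ 2 := Polynomial.natDegree_le_iff_degree_le.mpr (by exact_mod_cast hh)
  intro hd
  have key : ∀ l m : F, l * f.coeff 1 + m * h.coeff 1 = 0 → l * f.coeff 2 + m * h.coeff 2 = 0 →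
      (l, m) ≠ (0,0) → False := by
    intro l m e1 e2 hne
    apply hind l m hne (l * f.coeff 0 + m * h.coeff 0)
    ext n
    simp only [Polynomial.coeff_add, Polynomial.coeff_C_mul]
    match n with
    | 0 => simp [Polynomial.coeff_C]
    | 1 => simpa [Polynomial.coeff_C] using e1
    | 2 => simpa [Polynomial.coeff_C] using e2
    | (k+3) =>
      rw [Polynomial.coeff_eq_zero_of_natDegree_lt (lt_of_le_of_lt hfd (by omega)),
        Polynomial.coeff_eq_zero_of_natDegree_lt (lt_of_le_of_lt hhd (by omega))]
      simp [Polynomial.coeff_C]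
  by_cases hf1 : f.coeff 1 = 0 ∧ f.coeff 2 = 0
  · exact key 1 0 (by simp [hf1.1]) (by simp [hf1.2]) (by simp)
  · by_cases hc1 : f.coeff 1 = 0 ∧ h.coeff 1 = 0
    · have hf2 : f.coeff 2 ≠ 0 := fun hf2 => hf1 ⟨hc1.1, hf2⟩
      refine key (h.coeff 2) (-(f.coeff 2)) (by rw [hc1.1, hc1.2]; ring) (by ring) ?_
      simp [Prod.ext_iff, hf2]
    · refine key (h.coeff 1) (-(f.coeff 1)) (by ring) (by linear_combination -hd) ?_
      intro hpe
      rw [Prod.ext_iff] at hpe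
      have hh1 : h.coeff 1 = 0 := hpe.1
      have hf1' : f.coeff 1 = 0 := by
        have := hpe.2; simpa using this
      exact hc1 ⟨hf1', hh1⟩

private lemma poly_inj (f h : Polynomial F) (hf : f.degree ≤ 2) (hh : h.degree ≤ 2)
    (h2F : (2:F) ≠ 0)
    (hdet : f.coeff 1 * h.coeff 2 - f.coeff 2 * h.coeff 1 ≠ 0) :
    ∀ a a' b b' : F, a ≠ a' →
      f.eval a - f.eval a' = f.eval b - f.eval b' →
      h.eval a - h.eval a' = h.eval b - h.eval b' → a = b ∧ a' = b' := by
  intro a a' b b' hne e1 e2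
  rw [eval_quad f hf, eval_quad f hf, eval_quad f hf, eval_quad f hf] at e1
  rw [eval_quad h hh, eval_quad h hh, eval_quad h hh, eval_quad h hh] at e2
  have E1 : f.coeff 1 * ((a - a') - (b - b'))
      + f.coeff 2 * ((a^2 - a'^2) - (b^2 - b'^2)) = 0 := by linear_combination e1
  have E2 : h.coeff 1 * ((a - a') - (b - b'))
      + h.coeff 2 * ((a^2 - a'^2) - (b^2 - b'^2)) = 0 := by linear_combination e2
  have hd1 : a - a' = b - b' := by
    have hz : (f.coeff 1 * h.coeff 2 - f.coeff 2 * h.coeff 1) * ((a - a') - (b - b')) = 0 := by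
      linear_combination h.coeff 2 * E1 - f.coeff 2 * E2
    rcases mul_eq_zero.mp hz with hc | hc
    · exact absurd hc hdet
    · exact sub_eq_zero.mp (by linear_combination hc)
  have hd2 : a^2 - a'^2 = b^2 - b'^2 := by
    have hz : (f.coeff 1 * h.coeff 2 - f.coeff 2 * h.coeff 1) * ((a^2 - a'^2) - (b^2 - b'^2)) = 0 := by
      linear_combination f.coeff 1 * E2 - h.coeff 1 * E1
    rcases mul_eq_zero.mp hz with hc | hc
    · exact absurd hc hdet
    · exact sub_eq_zero.mp (by linear_combination hc)
  have hdne : a - a' ≠ 0 := sub_ne_zero.mpr hne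
  have hsum : a + a' = b + b' := by
    have hmm : (a - a') * (a + a') = (a - a') * (b + b') := by
      linear_combination hd2 - (b + b') * hd1
    exact mul_left_cancel₀ hdne hmm
  constructor
  · have hmm : 2*a = 2*b := by linear_combination hd1 + hsum
    exact mul_left_cancel₀ h2F hmm
  · have hmm : 2*a' = 2*b' := by linear_combination hsum - hd1
    exact mul_left_cancel₀ h2F hmm

end PolyPart


private lemma card_filter_shift {F : Type} [AddCommGroup F] [Fintype F] [DecidableEq F]
    (A : Finset F) (c : F) :
    ((Finset.univ : Finset F).filter (fun s => s - c ∈ A)).card = A.card := by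
  apply Finset.card_bij (fun s _ => s - c)
  · intro s hs; simpa using (Finset.mem_filter.mp hs).2
  · intro s hs t ht hst; exact sub_left_injective hst
  · intro b hb; exact ⟨b + c, by simp [hb], by simp⟩

set_option maxHeartbeats 1000000 in
private theorem main_count {F : Type} [Field F] [Fintype F] [DecidableEq F]
    (φ ψ : F → F)
    (hinj : ∀ a a' b b' : F, a ≠ a' →
      φ a - φ a' = φ b - φ b' → ψ a - ψ a' = ψ b - ψ b' → a = b ∧ a' = b')
    (A₁ A₂ A₃ : Finset F) (h1 : A₁.Nonempty) (h2 : A₂.Nonempty) (h3 : A₃.Nonempty) :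
    (1/2 : ℝ) * min (Real.sqrt ((A₁.card : ℝ) * (Fintype.card F : ℝ)))
        (Real.sqrt ((A₁.card : ℝ) ^ 2 * (A₂.card : ℝ) * (A₃.card : ℝ) / (Fintype.card F : ℝ)))
      ≤ max (((A₁.image φ + A₂).card : ℝ)) (((A₁.image ψ + A₃).card : ℝ)) := by
  classical
  set q := Fintype.card F with hq
  set S := A₁.image φ + A₂ with hS
  set T := A₁.image ψ + A₃ with hT
  set m : F × F → ℕ := fun p => (univ.filter (fun a : F => p.1 - φ a ∈ A₂ ∧ p.2 - ψ a ∈ A₃)).card with hm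
  have L0 : ∑ p : F × F, m p = q * (A₂.card * A₃.card) := by
    have hcs : ∑ p : F × F, m p
        = ((univ : Finset (F × F)).sigma fun p =>
            univ.filter (fun a : F => p.1 - φ a ∈ A₂ ∧ p.2 - ψ a ∈ A₃)).card := by
      rw [Finset.card_sigma]
    rw [hcs]
    have hcb : ((univ : Finset (F × F)).sigma fun p =>
            univ.filter (fun a : F => p.1 - φ a ∈ A₂ ∧ p.2 - ψ a ∈ A₃)).card
        = ((univ : Finset F) ×ˢ (A₂ ×ˢ A₃)).card := by
      apply Finset.card_nbij' (fun x => (x.2, (x.1.1 - φ x.2, x.1.2 - ψ x.2)))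
        (fun y => ⟨(φ y.1 + y.2.1, ψ y.1 + y.2.2), y.1⟩)
      · intro x hx
        simp only [Finset.mem_coe, Finset.mem_sigma, Finset.mem_filter, Finset.mem_univ, true_and] at hx
        simp [hx.1, hx.2, Finset.mem_product]
      · intro y hy
        simp only [Finset.mem_coe, Finset.mem_product, Finset.mem_univ, true_and] at hy
        simp [hy.1, hy.2]
      · intro x hx; simp
      · intro y hy; simp
    rw [hcb, Finset.card_product, Finset.card_product, Finset.card_univ]
  have L1 : A₁.card * (A₂.card * A₃.card) ≤ ∑ p ∈ S ×ˢ T, m p := by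
    have hcs : ∑ p ∈ S ×ˢ T, m p
        = ((S ×ˢ T).sigma fun p =>
            univ.filter (fun a : F => p.1 - φ a ∈ A₂ ∧ p.2 - ψ a ∈ A₃)).card := by
      rw [Finset.card_sigma]
    have hc1 : A₁.card * (A₂.card * A₃.card) = (A₁ ×ˢ (A₂ ×ˢ A₃)).card := by
      simp [Finset.card_product]
    rw [hcs, hc1]
    apply Finset.card_le_card_of_injOn
      (fun x : F × F × F => (⟨(φ x.1 + x.2.1, ψ x.1 + x.2.2), x.1⟩ :
        (_ : F × F) × F))
    · intro x hx
      simp only [Finset.mem_coe, Finset.mem_product] at hx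
      have ha := hx.1
      have hb := hx.2.1
      have hc := hx.2.2
      simp only [Finset.mem_coe, Finset.mem_sigma, Finset.mem_filter, Finset.mem_univ, true_and]
      refine ⟨Finset.mem_product.mpr ⟨?_, ?_⟩, by simp [hb], by simp [hc]⟩
      · exact Finset.add_mem_add (Finset.mem_image_of_mem φ ha) hb
      · exact Finset.add_mem_add (Finset.mem_image_of_mem ψ ha) hc
    · intro x hx y hy hxy
      simp only [Sigma.mk.inj_iff, Prod.mk.injEq, heq_eq_eq] at hxy
      obtain ⟨⟨e1, e2⟩, e3⟩ := hxy
      have hb : x.2.1 = y.2.1 := by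
        have := e1; rw [e3] at this; exact add_left_cancel this
      have hc : x.2.2 = y.2.2 := by
        have := e2; rw [e3] at this; exact add_left_cancel this
      exact Prod.ext e3 (Prod.ext hb hc)
  have L2 : ∑ p : F × F, (m p)^2 ≤ q * (A₂.card * A₃.card) + (A₂.card * A₃.card)^2 := by
    set c2 : F → F → ℕ := fun a a' =>
      (univ.filter fun s : F => s - φ a ∈ A₂ ∧ s - φ a' ∈ A₂).card with hc2
    set c3 : F → F → ℕ := fun a a' =>
      (univ.filter fun t : F => t - ψ a ∈ A₃ ∧ t - ψ a' ∈ A₃).card with hc3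
    have key : ∑ p : F × F, (m p)^2 = ∑ x : F × F, c2 x.1 x.2 * c3 x.1 x.2 := by
      have e1 : ∀ p : F × F, (m p)^2
          = ∑ x : F × F, (if (p.1 - φ x.1 ∈ A₂ ∧ p.2 - ψ x.1 ∈ A₃) then 1 else 0)
              * (if (p.1 - φ x.2 ∈ A₂ ∧ p.2 - ψ x.2 ∈ A₃) then 1 else 0) := by
        intro p
        simp only [hm]
        rw [Finset.card_filter, sq, Finset.sum_mul_sum, Fintype.sum_prod_type]
      have e2 : ∀ x : F × F,
          (∑ p : F × F, (if (p.1 - φ x.1 ∈ A₂ ∧ p.2 - ψ x.1 ∈ A₃) then 1 else 0)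
              * (if (p.1 - φ x.2 ∈ A₂ ∧ p.2 - ψ x.2 ∈ A₃) then 1 else 0))
          = c2 x.1 x.2 * c3 x.1 x.2 := by
        intro x
        have e3 : ∀ p : F × F,
            (if (p.1 - φ x.1 ∈ A₂ ∧ p.2 - ψ x.1 ∈ A₃) then (1:ℕ) else 0)
              * (if (p.1 - φ x.2 ∈ A₂ ∧ p.2 - ψ x.2 ∈ A₃) then 1 else 0)
            = (if (p.1 - φ x.1 ∈ A₂ ∧ p.1 - φ x.2 ∈ A₂) then 1 else 0)
              * (if (p.2 - ψ x.1 ∈ A₃ ∧ p.2 - ψ x.2 ∈ A₃) then 1 else 0) := by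
          intro p
          by_cases h1 : p.1 - φ x.1 ∈ A₂ <;> by_cases h2 : p.2 - ψ x.1 ∈ A₃ <;>
            by_cases h3 : p.1 - φ x.2 ∈ A₂ <;> by_cases h4 : p.2 - ψ x.2 ∈ A₃ <;>
            simp [h1, h2, h3, h4]
        rw [Finset.sum_congr rfl (fun p _ => e3 p)]
        rw [Fintype.sum_prod_type]
        dsimp only
        rw [hc2, hc3]
        dsimp only
        rw [Finset.card_filter, Finset.card_filter, Finset.sum_mul_sum]
      calc ∑ p : F × F, (m p)^2
          = ∑ p : F × F, ∑ x : F × F,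
              (if (p.1 - φ x.1 ∈ A₂ ∧ p.2 - ψ x.1 ∈ A₃) then 1 else 0)
              * (if (p.1 - φ x.2 ∈ A₂ ∧ p.2 - ψ x.2 ∈ A₃) then 1 else 0) :=
            Finset.sum_congr rfl (fun p _ => e1 p)
        _ = ∑ x : F × F, ∑ p : F × F,
              (if (p.1 - φ x.1 ∈ A₂ ∧ p.2 - ψ x.1 ∈ A₃) then 1 else 0)
              * (if (p.1 - φ x.2 ∈ A₂ ∧ p.2 - ψ x.2 ∈ A₃) then 1 else 0) :=
            Finset.sum_comm
        _ = ∑ x : F × F, c2 x.1 x.2 * c3 x.1 x.2 :=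
            Finset.sum_congr rfl (fun x _ => e2 x)
    rw [key]
    have hsplit : ∑ x : F × F, c2 x.1 x.2 * c3 x.1 x.2
        = (∑ x ∈ (univ : Finset F).diag, c2 x.1 x.2 * c3 x.1 x.2)
          + ∑ x ∈ (univ : Finset F).offDiag, c2 x.1 x.2 * c3 x.1 x.2 := by
      rw [← Finset.sum_union (Finset.disjoint_diag_offDiag _), Finset.diag_union_offDiag,
        Finset.univ_product_univ]
    rw [hsplit]
    have hdiag : (∑ x ∈ (univ : Finset F).diag, c2 x.1 x.2 * c3 x.1 x.2)
        = q * (A₂.card * A₃.card) := by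
      have : ∀ a : F, c2 a a * c3 a a = A₂.card * A₃.card := by
        intro a
        have e2 : c2 a a = A₂.card := by
          rw [hc2]; simp only [and_self]; exact card_filter_shift A₂ (φ a)
        have e3 : c3 a a = A₃.card := by
          rw [hc3]; simp only [and_self]; exact card_filter_shift A₃ (ψ a)
        rw [e2, e3]
      have hdsum : (∑ x ∈ (univ : Finset F).diag, c2 x.1 x.2 * c3 x.1 x.2)
          = ∑ a : F, c2 a a * c3 a a := by
        apply Finset.sum_nbij' (fun x : F × F => x.1) (fun a : F => (a, a))
        · intro x hx; exact Finset.mem_univ _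
        · intro a ha; simp [Finset.mem_diag]
        · intro x hx
          rw [Finset.mem_diag] at hx
          exact (Prod.ext rfl hx.2)
        · intro a ha; rfl
        · intro x hx
          rw [Finset.mem_diag] at hx
          rw [← hx.2]
      rw [hdsum, Finset.sum_congr rfl (fun a _ => this a), Finset.sum_const,
        Finset.card_univ, smul_eq_mul]
    have hoff : (∑ x ∈ (univ : Finset F).offDiag, c2 x.1 x.2 * c3 x.1 x.2)
        ≤ (A₂.card * A₃.card)^2 := by
      set D2 : F → ℕ := fun u =>
        ((A₂ ×ˢ A₂).filter fun bb : F × F => bb.2 - bb.1 = u).card with hD2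
      set D3 : F → ℕ := fun u =>
        ((A₃ ×ˢ A₃).filter fun bb : F × F => bb.2 - bb.1 = u).card with hD3
      have hc2le : ∀ a a' : F, c2 a a' ≤ D2 (φ a - φ a') := by
        intro a a'
        apply Finset.card_le_card_of_injOn (fun s => (s - φ a, s - φ a'))
        · intro s hs
          simp only [Finset.mem_coe, Finset.mem_filter, Finset.mem_univ, true_and] at hs
          simp only [Finset.mem_coe, Finset.mem_filter, Finset.mem_product]
          exact ⟨⟨hs.1, hs.2⟩, by ring⟩
        · intro s _ t _ hst
          have h1 := congrArg Prod.fst hst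
          simpa using h1
      have hc3le : ∀ a a' : F, c3 a a' ≤ D3 (ψ a - ψ a') := by
        intro a a'
        apply Finset.card_le_card_of_injOn (fun s => (s - ψ a, s - ψ a'))
        · intro s hs
          simp only [Finset.mem_coe, Finset.mem_filter, Finset.mem_univ, true_and] at hs
          simp only [Finset.mem_coe, Finset.mem_filter, Finset.mem_product]
          exact ⟨⟨hs.1, hs.2⟩, by ring⟩
        · intro s _ t _ hst
          have h1 := congrArg Prod.fst hst
          simpa using h1
      have step1 : (∑ x ∈ (univ : Finset F).offDiag, c2 x.1 x.2 * c3 x.1 x.2)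
          ≤ ∑ x ∈ (univ : Finset F).offDiag, D2 (φ x.1 - φ x.2) * D3 (ψ x.1 - ψ x.2) :=
        Finset.sum_le_sum (fun x _ => Nat.mul_le_mul (hc2le _ _) (hc3le _ _))
      have step2 : (∑ x ∈ (univ : Finset F).offDiag, D2 (φ x.1 - φ x.2) * D3 (ψ x.1 - ψ x.2))
          ≤ ∑ y : F × F, D2 y.1 * D3 y.2 := by
        have hi : ∀ x ∈ (univ : Finset F).offDiag, ∀ y ∈ (univ : Finset F).offDiag,
            (fun x : F × F => (φ x.1 - φ x.2, ψ x.1 - ψ x.2)) x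
              = (fun x : F × F => (φ x.1 - φ x.2, ψ x.1 - ψ x.2)) y → x = y := by
          intro x hx y hy hxy
          rw [Finset.mem_offDiag] at hx
          simp only [Prod.mk.injEq] at hxy
          obtain ⟨hh1, hh2⟩ := hinj x.1 x.2 y.1 y.2 hx.2.2 hxy.1 hxy.2
          exact Prod.ext hh1 hh2
        calc (∑ x ∈ (univ : Finset F).offDiag, D2 (φ x.1 - φ x.2) * D3 (ψ x.1 - ψ x.2))
            = ∑ y ∈ ((univ : Finset F).offDiag.image
                fun x : F × F => (φ x.1 - φ x.2, ψ x.1 - ψ x.2)), D2 y.1 * D3 y.2 :=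
              by rw [Finset.sum_image hi]
          _ ≤ ∑ y : F × F, D2 y.1 * D3 y.2 :=
              Finset.sum_le_sum_of_subset (Finset.subset_univ _)
      have step3 : (∑ y : F × F, D2 y.1 * D3 y.2) = (A₂.card * A₃.card)^2 := by
        rw [Fintype.sum_prod_type, ← Finset.sum_mul_sum]
        have hD2s : (∑ u : F, D2 u) = A₂.card * A₂.card := by
          rw [← Finset.card_product A₂ A₂]
          exact (Finset.card_eq_sum_card_fiberwise
            (f := fun bb : F × F => bb.2 - bb.1) (fun x _ => Finset.mem_univ _)).symm
        have hD3s : (∑ u : F, D3 u) = A₃.card * A₃.card := by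
          rw [← Finset.card_product A₃ A₃]
          exact (Finset.card_eq_sum_card_fiberwise
            (f := fun bb : F × F => bb.2 - bb.1) (fun x _ => Finset.mem_univ _)).symm
        rw [hD2s, hD3s]; ring
      exact step1.trans (step2.trans (le_of_eq step3))
    exact Nat.add_le_add (le_of_eq hdiag) hoff
  -- pass to real numbers
  have hqpos : 0 < (q : ℝ) := by
    have : 0 < q := Fintype.card_pos
    exact_mod_cast this
  have ha1 : (1:ℝ) ≤ (A₁.card : ℝ) := by exact_mod_cast h1.card_pos
  have ha2 : (1:ℝ) ≤ (A₂.card : ℝ) := by exact_mod_cast h2.card_pos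
  have ha3 : (1:ℝ) ≤ (A₃.card : ℝ) := by exact_mod_cast h3.card_pos
  set a1 := (A₁.card : ℝ) with ha1d
  set a2 := (A₂.card : ℝ) with ha2d
  set a3 := (A₃.card : ℝ) with ha3d
  set Q := (q : ℝ) with hQd
  have hQne : Q ≠ 0 := ne_of_gt hqpos
  have ha23 : (0:ℝ) < a2 * a3 := by nlinarith
  set μ : ℝ := a2 * a3 / Q with hμ
  set g : F × F → ℝ := fun p => (m p : ℝ) - μ with hg
  have hsum_univ : ∑ p : F × F, (m p : ℝ) = Q * (a2 * a3) := by
    have : ∑ p : F × F, (m p : ℝ) = ((∑ p : F × F, m p : ℕ) : ℝ) := by push_cast; rfl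
    rw [this, L0]; push_cast; ring
  have hsumsq : ∑ p : F × F, ((m p : ℝ))^2 ≤ Q * (a2*a3) + (a2*a3)^2 := by
    calc ∑ p : F × F, ((m p : ℝ))^2 = ((∑ p : F × F, (m p)^2 : ℕ) : ℝ) := by push_cast; rfl
      _ ≤ ((q * (A₂.card * A₃.card) + (A₂.card * A₃.card)^2 : ℕ) : ℝ) := by exact_mod_cast L2
      _ = Q * (a2*a3) + (a2*a3)^2 := by push_cast; ring
  have hvar : ∑ p : F × F, (g p)^2 ≤ Q * (a2 * a3) := by
    have expand : ∀ p : F × F, (g p)^2 = ((m p : ℝ))^2 - 2*μ*(m p : ℝ) + μ^2 := by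
      intro p; simp only [hg]; ring
    rw [Finset.sum_congr rfl (fun p _ => expand p)]
    rw [Finset.sum_add_distrib, Finset.sum_sub_distrib, ← Finset.mul_sum, hsum_univ,
      Finset.sum_const, Finset.card_univ, nsmul_eq_mul]
    have hNc : ((Fintype.card (F × F) : ℕ) : ℝ) = Q * Q := by
      rw [Fintype.card_prod]; push_cast [hQd, hq]; ring
    rw [hNc]
    have e1 : 2*μ*(Q*(a2*a3)) = 2*(a2*a3)^2 := by rw [hμ]; field_simp
    have e2 : Q*Q*μ^2 = (a2*a3)^2 := by rw [hμ]; field_simp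
    rw [e1, e2]
    linarith [hsumsq]
  set X := (((S ×ˢ T).card : ℕ) : ℝ) with hX
  have hXnn : 0 ≤ X := Nat.cast_nonneg _
  have hcs : (∑ p ∈ S ×ˢ T, g p) ≤ Real.sqrt (X * (Q * (a2*a3))) := by
    have h1' : (∑ p ∈ S ×ˢ T, g p)^2 ≤ X * ∑ p ∈ S ×ˢ T, (g p)^2 :=
      sq_sum_le_card_mul_sum_sq
    have h2' : ∑ p ∈ S ×ˢ T, (g p)^2 ≤ ∑ p : F × F, (g p)^2 :=
      Finset.sum_le_sum_of_subset_of_nonneg (Finset.subset_univ _) (fun i _ _ => sq_nonneg _)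
    have h3' : (∑ p ∈ S ×ˢ T, g p)^2 ≤ X * (Q * (a2*a3)) := by
      calc (∑ p ∈ S ×ˢ T, g p)^2 ≤ X * ∑ p ∈ S ×ˢ T, (g p)^2 := h1'
        _ ≤ X * (Q * (a2*a3)) :=
            mul_le_mul_of_nonneg_left (le_trans h2' hvar) hXnn
    calc ∑ p ∈ S ×ˢ T, g p ≤ |∑ p ∈ S ×ˢ T, g p| := le_abs_self _
      _ = Real.sqrt ((∑ p ∈ S ×ˢ T, g p)^2) := (Real.sqrt_sq_eq_abs _).symm
      _ ≤ Real.sqrt (X * (Q * (a2*a3))) := Real.sqrt_le_sqrt h3'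
  have hmain : a1 * (a2 * a3) ≤ X * μ + Real.sqrt (X * (Q * (a2*a3))) := by
    have e : ∑ p ∈ S ×ˢ T, (m p : ℝ) = (∑ p ∈ S ×ˢ T, g p) + X * μ := by
      simp only [hg]
      rw [Finset.sum_sub_distrib, Finset.sum_const, nsmul_eq_mul]
      ring
    have hL1' : a1 * (a2*a3) ≤ ∑ p ∈ S ×ˢ T, (m p : ℝ) := by
      have : ((A₁.card * (A₂.card * A₃.card) : ℕ) : ℝ) ≤ ((∑ p ∈ S ×ˢ T, m p : ℕ) : ℝ) := by
        exact_mod_cast L1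
      calc a1 * (a2*a3) = ((A₁.card * (A₂.card * A₃.card) : ℕ) : ℝ) := by push_cast; ring
        _ ≤ ((∑ p ∈ S ×ˢ T, m p : ℕ) : ℝ) := this
        _ = ∑ p ∈ S ×ˢ T, (m p : ℝ) := by push_cast; rfl
    linarith [hcs, e ▸ hL1']
  set M := max ((S.card : ℝ)) ((T.card : ℝ)) with hM
  have hMnnS : (0:ℝ) ≤ (S.card : ℝ) := Nat.cast_nonneg _
  have hM0 : 0 ≤ M := le_trans hMnnS (le_max_left _ _)
  have hXM : X ≤ M * M := by
    have hcp : X = ((S.card : ℕ) : ℝ) * ((T.card : ℕ) : ℝ) := by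
      rw [hX, Finset.card_product]; push_cast; ring
    rw [hcp]
    exact mul_le_mul (le_max_left _ _) (le_max_right _ _) (Nat.cast_nonneg _) hM0
  have final : ∀ t : ℝ,
      min (Real.sqrt (a1 * Q)) (Real.sqrt (a1^2 * a2 * a3 / Q)) ≤ Real.sqrt t →
      t ≤ 4*(M*M) →
      (1/2 : ℝ) * min (Real.sqrt (a1 * Q)) (Real.sqrt (a1^2 * a2 * a3 / Q)) ≤ M := by
    intro t h1t h2t
    have hst : Real.sqrt t ≤ 2*M := by
      have hh : Real.sqrt t ≤ Real.sqrt ((2*M)^2) := Real.sqrt_le_sqrt (by nlinarith)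
      rwa [Real.sqrt_sq (by linarith)] at hh
    linarith [h1t.trans hst]
  by_cases hc : a1 * (a2*a3) / 2 ≤ X * μ
  · -- first term case
    have hXge : a1 * Q / 2 ≤ X := by
      rw [hμ] at hc
      have hmul : a1*(a2*a3)/2 * Q ≤ X * (a2*a3) := by
        have hmm := mul_le_mul_of_nonneg_right hc (le_of_lt hqpos)
        calc a1*(a2*a3)/2 * Q ≤ X * (a2*a3/Q) * Q := hmm
          _ = X * (a2*a3) := by field_simp
      have e : a1*(a2*a3)/2*Q = a1*Q/2*(a2*a3) := by ring
      rw [e] at hmul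
      exact le_of_mul_le_mul_right hmul ha23
    exact final (a1 * Q) (min_le_left _ _) (by nlinarith [hXM])
  · -- second term case
    push_neg at hc
    have hsq : a1 * (a2*a3) / 2 ≤ Real.sqrt (X * (Q * (a2*a3))) := by linarith [hmain]
    have hsq2 : (a1 * (a2*a3) / 2)^2 ≤ X * (Q * (a2*a3)) := by
      have hnn : (0:ℝ) ≤ a1 * (a2*a3) / 2 := by positivity
      have hmul := mul_self_le_mul_self hnn hsq
      rw [Real.mul_self_sqrt (mul_nonneg hXnn (by positivity : (0:ℝ) ≤ Q * (a2*a3)))] at hmul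
      calc (a1 * (a2*a3) / 2)^2 = (a1 * (a2*a3) / 2) * (a1 * (a2*a3) / 2) := by ring
        _ ≤ X * (Q * (a2*a3)) := hmul
    have hXge : a1^2 * a2 * a3 / Q / 4 ≤ X := by
      rw [div_le_iff₀ (by norm_num : (0:ℝ) < 4), div_le_iff₀ hqpos]
      nlinarith [hsq2, ha23, hqpos]
    refine final (a1^2 * a2 * a3 / Q) (min_le_right _ _) ?_
    have : a1^2 * a2 * a3 / Q ≤ 4 * X := by linarith [hXge]
    linarith [hXM]



/-- **Solymosi, Hart–Li–Shen.** There is an absolute `c > 0` such that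
for every odd finite field `F_q` and polynomials `f, h` of degree at most 2 with
`λ·f + μ·h` nonconstant for all `(λ,μ) ≠ (0,0)`, and all nonempty `A₁, A₂, A₃ ⊆ F_q`,
`max(|f(A₁)+A₂|, |h(A₁)+A₃|) ≥ c·min(√(|A₁|q), √(|A₁|²|A₂||A₃|/q))`. -/
theorem sum_product_polynomials :
    ∃ c : ℝ, 0 < c ∧
      ∀ (F : Type) [Field F] [Fintype F] [DecidableEq F],
        Odd (Fintype.card F) →
        ∀ (f h : Polynomial F), f.degree ≤ 2 → h.degree ≤ 2 →
        (∀ l m : F, (l, m) ≠ (0, 0) →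
          ∀ a : F, Polynomial.C l * f + Polynomial.C m * h ≠ Polynomial.C a) →
        ∀ (A₁ A₂ A₃ : Finset F),
          A₁.Nonempty → A₂.Nonempty → A₃.Nonempty →
          c * min (Real.sqrt ((A₁.card : ℝ) * (Fintype.card F : ℝ)))
              (Real.sqrt ((A₁.card : ℝ) ^ 2 * (A₂.card : ℝ) * (A₃.card : ℝ)
                / (Fintype.card F : ℝ)))
            ≤ max (((A₁.image (fun x => f.eval x) + A₂).card : ℝ))
                (((A₁.image (fun x => h.eval x) + A₃).card : ℝ)) := by
  refine ⟨1/2, by norm_num, ?_⟩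
  intro F _ _ _ hodd f h hf hh hind A₁ A₂ A₃ h1 h2 h3
  classical
  have h2F : (2:F) ≠ 0 := by
    have hchar : ringChar F ≠ 2 := by
      intro hc
      have heven := FiniteField.even_card_iff_char_two.mp hc
      rw [Nat.odd_iff] at hodd
      omega
    exact Ring.two_ne_zero hchar
  have hdet := det_ne_zero f h hf hh hind
  have hinj := poly_inj f h hf hh h2F hdet
  exact main_count (fun x => f.eval x) (fun x => h.eval x) hinj A₁ A₂ A₃ h1 h2 h3
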